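/- Let G be a looped graph with n vertices, m edges and c loops with m + c = 2n. Then the determinant of the square matrix M_{2,0,2}(G) is nonzero as a polynomial in the indeterminates a_e, b_e, c_l, d_l if and only if the edges and loops of G can be partitioned into two disjoint sets, each of which (together with the full vertex set V) forms a spanning looped forest of G, i.e. each set consists of n edges plus loops whose edges form a forest on V in which every connected component contains exactly one loop of that set. -/

import Mathlib

/-!
STATEMENT 11: det M_{2,0,2}(G) ≠ 0 iff G decomposes into two spanning looped forests.
Let G be a looped graph with n vertices, m edges and c loops with m + c = 2n.  Then the
determinant of the square matrix M_{2,0,2}(G) is nonzero as a polynomial in a_e, b_e,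
c_l, d_l iff the edges and loops of G can be partitioned into two disjoint sets, each of
which forms a spanning looped forest of G.
-/

open MvPolynomial

/-- A looped graph. -/
structure LGraph (V E L : Type) where
  ends : E → V × V
  ne : ∀ e, (ends e).1 ≠ (ends e).2
  loopAt : L → V

namespace LGraph

variable {V E L : Type}

/-- The simple graph on `V` underlying the edges of `G` satisfying `P`. -/
def subSG (G : LGraph V E L) (P : E → Prop) : SimpleGraph V :=
  SimpleGraph.fromRel fun u v => ∃ e, P e ∧ G.ends e = (u, v)

/-- The edges satisfying `P` and the loops satisfying `Q` form a spanning looped forest: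
the selected edges are distinct as unordered pairs and acyclic on `V`, and every
connected component of the resulting forest (isolated vertices included) carries exactly
one selected loop. -/
def IsLoopedForestOn (G : LGraph V E L) (P : E → Prop) (Q : L → Prop) : Prop :=
  (∀ e f, P e → P f →
      s((G.ends e).1, (G.ends e).2) = s((G.ends f).1, (G.ends f).2) → e = f) ∧
  (G.subSG P).IsAcyclic ∧
  ∀ comp : (G.subSG P).ConnectedComponent,
    Nat.card {l : L // Q l ∧ (G.subSG P).connectedComponentMk (G.loopAt l) = comp} = 1

/-- The matrix `M_{2,0,2}(G)` over the polynomial ring `ℝ[a_e, b_e, c_l, d_l]`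
(`Sum.inl (Sum.inl e)` is `a_e`, `Sum.inl (Sum.inr e)` is `b_e`, `Sum.inr (Sum.inl l)`
is `c_l`, `Sum.inr (Sum.inr l)` is `d_l`). -/
noncomputable def M202 [DecidableEq V] (G : LGraph V E L) :
    Matrix (E ⊕ L) (V ⊕ V) (MvPolynomial ((E ⊕ E) ⊕ (L ⊕ L)) ℝ) := fun row col =>
  match row with
  | Sum.inl e =>
      match col with
      | Sum.inl v =>
          if v = (G.ends e).1 then X (Sum.inl (Sum.inl e))
          else if v = (G.ends e).2 then -X (Sum.inl (Sum.inl e)) else 0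
      | Sum.inr v =>
          if v = (G.ends e).1 then X (Sum.inl (Sum.inr e))
          else if v = (G.ends e).2 then -X (Sum.inl (Sum.inr e)) else 0
  | Sum.inr l =>
      match col with
      | Sum.inl v => if v = G.loopAt l then X (Sum.inr (Sum.inl l)) else 0
      | Sum.inr v => if v = G.loopAt l then X (Sum.inr (Sum.inr l)) else 0

end LGraph

open Matrix


namespace M202Aux
variable {V E L : Type}

def inc [DecidableEq V] (G : LGraph V E L) : (E ⊕ L) → V → ℝ
  | Sum.inl e, v => if v = (G.ends e).1 then 1 else if v = (G.ends e).2 then -1 else 0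
  | Sum.inr l, v => if v = G.loopAt l then 1 else 0

def vr : (E ⊕ L) → Bool → (E ⊕ E) ⊕ (L ⊕ L)
  | Sum.inl e, false => Sum.inl (Sum.inl e)
  | Sum.inl e, true => Sum.inl (Sum.inr e)
  | Sum.inr l, false => Sum.inr (Sum.inl l)
  | Sum.inr l, true => Sum.inr (Sum.inr l)

def sd : V ⊕ V → Bool := Sum.elim (fun _ => false) (fun _ => true)
def pj : V ⊕ V → V := Sum.elim id id

lemma vr_inj : ∀ (r r' : E ⊕ L) (b b' : Bool), vr r b = vr r' b' → r = r' ∧ b = b' := by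
  rintro (e|l) (e'|l') (_|_) (_|_) h <;> simp [vr] at h <;> simp [h]

lemma entry [DecidableEq V] (G : LGraph V E L) (r : E ⊕ L) (w : V ⊕ V) :
    LGraph.M202 G r w = C (inc G r (pj w)) * X (vr r (sd w)) := by
  rcases r with e | l <;> rcases w with v | v <;>
    simp only [LGraph.M202, inc, sd, pj, vr, Sum.elim_inl, Sum.elim_inr, id] <;>
    split_ifs <;> simp_all

def Nm [DecidableEq V] (G : LGraph V E L) (eqv : E ⊕ L ≃ V ⊕ V) (χ : (E ⊕ L) → Bool) :
    Matrix (E ⊕ L) (E ⊕ L) ℝ :=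
  fun i j => if sd (eqv j) = χ i then inc G i (pj (eqv j)) else 0

lemma prod_monomial {ι κ R : Type} [CommSemiring R] (s : Finset ι) (f : ι → (κ →₀ ℕ)) :
    ∏ i ∈ s, (monomial (f i) (1:R)) = monomial (∑ i ∈ s, f i) 1 := by
  classical
  induction s using Finset.induction_on with
  | empty => simp [monomial_zero']
  | insert _ _ h ih =>
      rw [Finset.prod_insert h, Finset.sum_insert h, ih, monomial_mul, one_mul]

lemma prod_ite_all {ι R : Type} [Fintype ι] [CommMonoidWithZero R]
    (q : ι → Prop) [DecidablePred q] (f : ι → R) :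
    ∏ i, (if q i then f i else 0) = if (∀ i, q i) then ∏ i, f i else 0 := by
  by_cases h : ∀ i, q i
  · rw [if_pos h]; exact Finset.prod_congr rfl fun i _ => if_pos (h i)
  · rw [if_neg h]
    push_neg at h
    obtain ⟨i, hi⟩ := h
    exact Finset.prod_eq_zero (Finset.mem_univ i) (if_neg hi)

variable [Fintype V] [Fintype E] [Fintype L]
  [DecidableEq V] [DecidableEq E] [DecidableEq L]
  (G : LGraph V E L) (eqv : E ⊕ L ≃ V ⊕ V)

noncomputable def expo (χ : (E ⊕ L) → Bool) : ((E ⊕ E) ⊕ (L ⊕ L)) →₀ ℕ :=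
  ∑ r : E ⊕ L, Finsupp.single (vr r (χ r)) 1

lemma det_Nm (χ : (E ⊕ L) → Bool) :
    (Nm G eqv χ).det = ∑ σ ∈ Finset.univ.filter
        (fun σ : Equiv.Perm (E ⊕ L) => (fun r => sd (eqv (σ r))) = χ),
      ((Equiv.Perm.sign σ : ℤ) : ℝ) * ∏ i, inc G i (pj (eqv (σ i))) := by
  rw [← Matrix.det_transpose, Matrix.det_apply', Finset.sum_filter]
  refine Finset.sum_congr rfl fun σ _ => ?_
  have : ∏ i, (Nm G eqv χ)ᵀ (σ i) i
      = if (∀ i, sd (eqv (σ i)) = χ i) then ∏ i, inc G i (pj (eqv (σ i))) else 0 := by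
    rw [← prod_ite_all (fun i => sd (eqv (σ i)) = χ i) (fun i => inc G i (pj (eqv (σ i))))]
    rfl
  rw [this, mul_ite, mul_zero]
  exact if_congr funext_iff.symm rfl rfl

lemma det_expand :
    ((LGraph.M202 G).submatrix id eqv).det
      = ∑ χ : (E ⊕ L) → Bool, monomial (expo χ) ((Nm G eqv χ).det) := by
  classical
  rw [← Matrix.det_transpose, Matrix.det_apply']
  have key : ∀ σ : Equiv.Perm (E ⊕ L),
      (((Equiv.Perm.sign σ : ℤ) : MvPolynomial ((E ⊕ E) ⊕ (L ⊕ L)) ℝ))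
          * ∏ i, ((LGraph.M202 G).submatrix id eqv)ᵀ (σ i) i
        = monomial (expo (fun r => sd (eqv (σ r))))
            (((Equiv.Perm.sign σ : ℤ) : ℝ) * ∏ i, inc G i (pj (eqv (σ i)))) := by
    intro σ
    have h1 : ∀ i, ((LGraph.M202 G).submatrix id eqv)ᵀ (σ i) i
        = C (inc G i (pj (eqv (σ i)))) * X (vr i (sd (eqv (σ i)))) := fun i => by
      rw [Matrix.transpose_apply, Matrix.submatrix_apply, id, entry]
    rw [Finset.prod_congr rfl (fun i _ => h1 i), Finset.prod_mul_distrib, ← map_prod]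
    have h2 : ∏ i, X (vr i (sd (eqv (σ i))))
        = monomial (expo (fun r => sd (eqv (σ r)))) (1:ℝ) := by
      rw [expo, ← prod_monomial]
      rfl
    rw [h2]
    rw [← map_intCast (C : ℝ →+* MvPolynomial ((E ⊕ E) ⊕ (L ⊕ L)) ℝ)
        ((Equiv.Perm.sign σ : ℤ))]
    rw [← mul_assoc, ← C_mul, C_mul_monomial, mul_one]
  rw [Finset.sum_congr rfl fun σ _ => key σ]
  rw [← Finset.sum_fiberwise Finset.univ (fun σ : Equiv.Perm (E ⊕ L) =>
        (fun r => sd (eqv (σ r)))) _]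
  refine Finset.sum_congr rfl fun χ _ => ?_
  rw [det_Nm, map_sum]
  refine Finset.sum_congr rfl fun σ hσ => ?_
  rw [Finset.mem_filter] at hσ
  rw [hσ.2]
end M202Aux

namespace M202Aux
variable {V E L : Type}

def dsign [DecidableEq V] (G : LGraph V E L) (e : E) (c : V × V) : ℝ :=
  if c = G.ends e then 1 else if c.swap = G.ends e then -1 else 0

lemma dsign_ne_zero [DecidableEq V] {G : LGraph V E L} {e : E} {c : V × V}
    (h : dsign G e c ≠ 0) : Sym2.mk c.1 c.2 = s((G.ends e).1, (G.ends e).2) := by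
  unfold dsign at h
  split_ifs at h with h1 h2
  · rw [h1]
  · rw [← h2]
    rcases c with ⟨c1, c2⟩
    exact Sym2.eq_swap
  · exact absurd rfl h

lemma telescope {W : Type} {H : SimpleGraph W} [DecidableEq W] {u v : W}
    (p : H.Walk u v) (x : W) :
    (p.darts.map (fun d => (if x = d.toProd.1 then (1:ℝ) else 0)
        - (if x = d.toProd.2 then 1 else 0))).sum
      = (if x = u then 1 else 0) - (if x = v then 1 else 0) := by
  induction p with
  | nil => simp
  | cons h p ih =>
      rw [SimpleGraph.Walk.darts_cons, List.map_cons, List.sum_cons, ih]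
      ring

lemma sum_listsum {α : Type} [Fintype E] (l : List α) (f : E → α → ℝ) :
    ∑ e : E, (l.map (f e)).sum = (l.map (fun a => ∑ e : E, f e a)).sum := by
  induction l with
  | nil => simp
  | cons a t ih => simp [Finset.sum_add_distrib, ih]

lemma listsum_mul {α : Type} (l : List α) (g : α → ℝ) (c : ℝ) :
    (l.map g).sum * c = (l.map (fun a => g a * c)).sum := by
  induction l with
  | nil => simp
  | cons a t ih => simp [add_mul, ih]

variable [Fintype E] [DecidableEq V] [DecidableEq E]

lemma dart_sum (G : LGraph V E L) {P : E → Prop} [DecidablePred P]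
    (hinj : ∀ e f, P e → P f →
      s((G.ends e).1, (G.ends e).2) = s((G.ends f).1, (G.ends f).2) → e = f)
    (d : (G.subSG P).Dart) (x : V) :
    ∑ e, (if P e then dsign G e d.toProd else 0) * inc G (Sum.inl e) x
      = (if x = d.toProd.1 then 1 else 0) - (if x = d.toProd.2 then 1 else 0) := by
  obtain ⟨⟨u, w⟩, hadj⟩ := d
  simp only [LGraph.subSG] at hadj
  rw [SimpleGraph.fromRel_adj] at hadj
  obtain ⟨hne, hor⟩ := hadj
  simp only
  have key : ∀ e₀, P e₀ → (G.ends e₀ = (u, w) ∨ G.ends e₀ = (w, u)) →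
      ∑ e, (if P e then dsign G e (u, w) else 0) * inc G (Sum.inl e) x
        = (if x = u then 1 else 0) - (if x = w then 1 else 0) := by
    intro e₀ he₀ hends
    have hsym : Sym2.mk u w = s((G.ends e₀).1, (G.ends e₀).2) := by
      rcases hends with h | h <;> rw [h] <;> simp [Sym2.eq_swap]
    rw [Finset.sum_eq_single e₀]
    · rw [if_pos he₀]
      rcases hends with h | h
      · have h1 : ((u, w) : V × V) = G.ends e₀ := by rw [h]
        rw [dsign, if_pos h1, one_mul, inc, h]
        dsimp only
        split_ifs with hx1 hx2 <;> first | ring1 | exact absurd (hx1.symm.trans hx2) hne | exact absurd (hx2.symm.trans hx1) hne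
      · have h1 : ¬ ((u, w) : V × V) = G.ends e₀ := by
          rw [h]; intro hcon
          rw [Prod.ext_iff] at hcon
          exact hne hcon.1
        have h2 : (Prod.swap (u, w)) = G.ends e₀ := by rw [h]; rfl
        rw [dsign, if_neg h1, if_pos h2, inc, h]
        dsimp only
        split_ifs with hx1 hx2 <;> first | ring1 | exact absurd (hx1.symm.trans hx2) hne | exact absurd (hx2.symm.trans hx1) hne
    · intro e _ hne'
      by_cases hPe : P e
      · rw [if_pos hPe]
        rcases eq_or_ne (dsign G e (u, w)) 0 with h | h
        · rw [h, zero_mul]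
        · exact absurd (hinj e e₀ hPe he₀ (by rw [← dsign_ne_zero h, hsym])) hne'
      · rw [if_neg hPe, zero_mul]
    · intro h; exact absurd (Finset.mem_univ e₀) h
  rcases hor with ⟨e₀, he₀, hends⟩ | ⟨e₀, he₀, hends⟩
  · exact key e₀ he₀ (Or.inl hends)
  · exact key e₀ he₀ (Or.inr hends)

lemma walk_sum (G : LGraph V E L) {P : E → Prop} [DecidablePred P]
    (hinj : ∀ e f, P e → P f →
      s((G.ends e).1, (G.ends e).2) = s((G.ends f).1, (G.ends f).2) → e = f)
    {u v : V} (p : (G.subSG P).Walk u v) (x : V) :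
    ∑ e, (if P e then (p.darts.map (fun d => dsign G e d.toProd)).sum else 0)
        * inc G (Sum.inl e) x
      = (if x = u then 1 else 0) - (if x = v then 1 else 0) := by
  have step : ∀ e : E,
      (if P e then (p.darts.map (fun d => dsign G e d.toProd)).sum else 0)
          * inc G (Sum.inl e) x
        = (p.darts.map (fun d =>
            (if P e then dsign G e d.toProd else 0) * inc G (Sum.inl e) x)).sum := by
    intro e
    by_cases hP : P e
    · rw [if_pos hP, listsum_mul]
      simp only [if_pos hP]
    · rw [if_neg hP, zero_mul]
      simp [if_neg hP]
  rw [Finset.sum_congr rfl (fun e _ => step e), sum_listsum]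
  rw [List.map_congr_left (fun d _ => dart_sum G hinj d x)]
  exact telescope p x

end M202Aux

namespace M202Aux
section Core
variable {V E L : Type} [Fintype V] [Fintype E] [Fintype L]
  [DecidableEq V] [DecidableEq E] [DecidableEq L]
  (G : LGraph V E L) (eqv : E ⊕ L ≃ V ⊕ V) (χ : (E ⊕ L) → Bool)

def bside : Bool → V → V ⊕ V := fun b v => if b then Sum.inr v else Sum.inl v

lemma sd_bside (b : Bool) (v : V) : sd (bside b v : V ⊕ V) = b := by cases b <;> rfl
lemma pj_bside (b : Bool) (v : V) : pj (bside b v : V ⊕ V) = v := by cases b <;> rfl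
lemma bside_sd_pj (w : V ⊕ V) : bside (sd w) (pj w) = w := by cases w <;> rfl

lemma mulVec_Nm (x : (E ⊕ L) → ℝ) (i : E ⊕ L) :
    (Nm G eqv χ).mulVec x i = ∑ v, inc G i v * x (eqv.symm (bside (χ i) v)) := by
  have h0 : (Nm G eqv χ).mulVec x i = ∑ j, Nm G eqv χ i j * x j := by
    simp [Matrix.mulVec, dotProduct]
  rw [h0, ← Equiv.sum_comp eqv.symm (fun j => Nm G eqv χ i j * x j)]
  cases hb : χ i <;>
    simp [Nm, sd, pj, bside, Fintype.sum_sum_type, hb, Equiv.apply_symm_apply]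

lemma det_Nm_eq_zero_of_dep (b : Bool) (w : (E ⊕ L) → ℝ) (hw : w ≠ 0)
    (hsupp : ∀ i, χ i ≠ b → w i = 0)
    (hdep : ∀ v, ∑ i, w i * inc G i v = 0) : (Nm G eqv χ).det = 0 := by
  rw [← Matrix.exists_vecMul_eq_zero_iff]
  refine ⟨w, hw, ?_⟩
  funext j
  have h0 : (Matrix.vecMul w (Nm G eqv χ)) j
      = ∑ i, w i * (if sd (eqv j) = χ i then inc G i (pj (eqv j)) else 0) := by
    simp [Matrix.vecMul, dotProduct, Nm]
  rw [h0]
  show _ = (0 : ℝ)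
  by_cases hb : sd (eqv j) = b
  · rw [← hdep (pj (eqv j))]
    refine Finset.sum_congr rfl fun i _ => ?_
    by_cases hc : sd (eqv j) = χ i
    · rw [if_pos hc]
    · rw [if_neg hc, hsupp i (fun h => hc (by rw [h, hb])), zero_mul, zero_mul]
  · refine Finset.sum_eq_zero fun i _ => ?_
    by_cases hc : sd (eqv j) = χ i
    · rw [hsupp i (fun h => hb (by rw [← h, hc])), zero_mul]
    · rw [if_neg hc, mul_zero]

lemma sum_inc_inl (e : E) (f : V → ℝ) :
    ∑ v, inc G (Sum.inl e) v * f v = f (G.ends e).1 - f (G.ends e).2 := by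
  have hne := G.ne e
  have key : ∀ v, inc G (Sum.inl e) v * f v
      = (if v = (G.ends e).1 then f v else 0) - (if v = (G.ends e).2 then f v else 0) := by
    intro v
    rw [inc]
    split_ifs with h1 h2 <;>
      first | ring1 | exact absurd (h1.symm.trans h2) hne
  rw [Finset.sum_congr rfl fun v _ => key v, Finset.sum_sub_distrib,
    Fintype.sum_ite_eq' (G.ends e).1 f, Fintype.sum_ite_eq' (G.ends e).2 f]

lemma sum_inc_inr (l : L) (f : V → ℝ) :
    ∑ v, inc G (Sum.inr l) v * f v = f (G.loopAt l) := by
  have key : ∀ v, inc G (Sum.inr l) v * f v = if v = G.loopAt l then f v else 0 := by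
    intro v
    rw [inc]
    split_ifs <;> ring1
  rw [Finset.sum_congr rfl fun v _ => key v, Fintype.sum_ite_eq' (G.loopAt l) f]

lemma two_point_sum {ι : Type} [Fintype ι] [DecidableEq ι]
    (a c : ι) (hne : a ≠ c) (k : ℝ) (g : ι → ℝ) :
    ∑ i, (if i = a then 1 else if i = c then k else 0) * g i = g a + k * g c := by
  have key : ∀ i, (if i = a then (1:ℝ) else if i = c then k else 0) * g i
      = (if i = a then g i else 0) + (if i = c then k * g i else 0) := by
    intro i
    split_ifs with h1 h2 <;>
      first | ring1 | exact absurd (h1 ▸ h2 : a = c) hne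
  rw [Finset.sum_congr rfl fun i _ => key i, Finset.sum_add_distrib,
    Fintype.sum_ite_eq' a g, Fintype.sum_ite_eq' c (fun i => k * g i)]

lemma reach_const {W : Type} {H : SimpleGraph W} (f : W → ℝ)
    (hadj : ∀ u v, H.Adj u v → f u = f v) :
    ∀ {u v : W}, H.Reachable u v → f u = f v := by
  intro u v hr
  obtain ⟨p⟩ := hr
  induction p with
  | nil => rfl
  | cons ha p ih => exact (hadj _ _ ha).trans ih

end Core
end M202Aux

namespace M202Aux
section Main
variable {V E L : Type} [Fintype V] [Fintype E] [Fintype L]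
  [DecidableEq V] [DecidableEq E] [DecidableEq L]
  (G : LGraph V E L) (eqv : E ⊕ L ≃ V ⊕ V) (χ : (E ⊕ L) → Bool)

theorem det_Nm_ne_zero_of_forests
    (h : ∀ b : Bool, G.IsLoopedForestOn
      (fun e => χ (Sum.inl e) = b) (fun l => χ (Sum.inr l) = b)) :
    (Nm G eqv χ).det ≠ 0 := by
  rw [Ne, ← Matrix.exists_mulVec_eq_zero_iff]
  rintro ⟨x, hx0, hx⟩
  apply hx0
  set z : Bool → V → ℝ := fun b v => x (eqv.symm (bside b v)) with hz
  have hrow : ∀ i, ∑ v, inc G i v * z (χ i) v = 0 := by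
    intro i
    rw [← mulVec_Nm G eqv χ x i, hx]
    rfl
  have hzero : ∀ b v, z b v = 0 := by
    intro b
    have hadj : ∀ u v', (G.subSG (fun e => χ (Sum.inl e) = b)).Adj u v' →
        z b u = z b v' := by
      intro u v' ha
      simp only [LGraph.subSG, SimpleGraph.fromRel_adj] at ha
      obtain ⟨-, ⟨e, he, hends⟩ | ⟨e, he, hends⟩⟩ := ha
      · have h1 := hrow (Sum.inl e)
        rw [he, sum_inc_inl, hends] at h1
        exact sub_eq_zero.mp h1
      · have h1 := hrow (Sum.inl e)
        rw [he, sum_inc_inl, hends] at h1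
        exact (sub_eq_zero.mp h1).symm
    intro v
    obtain ⟨⟨l, hl⟩⟩ := (Nat.card_eq_one_iff_unique.mp
      ((h b).2.2 ((G.subSG (fun e => χ (Sum.inl e) = b)).connectedComponentMk v))).2
    have h1 : z b (G.loopAt l) = 0 := by
      have h2 := hrow (Sum.inr l)
      rw [hl.1, sum_inc_inr] at h2
      exact h2
    have h2 := reach_const (z b) hadj (SimpleGraph.ConnectedComponent.eq.mp hl.2)
    rw [← h2, h1]
  funext j
  have hxj : x j = z (sd (eqv j)) (pj (eqv j)) := by
    rw [hz]
    simp [bside_sd_pj]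
  rw [hxj, hzero]
  rfl

theorem forests_of_det_Nm_ne_zero (hdet : (Nm G eqv χ).det ≠ 0) (b : Bool) :
    G.IsLoopedForestOn (fun e => χ (Sum.inl e) = b) (fun l => χ (Sum.inr l) = b) := by
  classical
  set P : E → Prop := fun e => χ (Sum.inl e) = b with hP
  set H : SimpleGraph V := G.subSG P with hH
  -- injectivity of selected edges
  have hinj : ∀ e f, P e → P f →
      s((G.ends e).1, (G.ends e).2) = s((G.ends f).1, (G.ends f).2) → e = f := by
    intro e f he hf hs
    by_contra hnef
    apply hdet
    have hnei : (Sum.inl e : E ⊕ L) ≠ Sum.inl f := fun hcon => hnef (Sum.inl.inj hcon)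
    rcases Sym2.eq_iff.mp hs with ⟨h1, h2⟩ | ⟨h1, h2⟩
    · refine det_Nm_eq_zero_of_dep G eqv χ b
        (fun i => if i = Sum.inl e then 1 else if i = Sum.inl f then -1 else 0) ?_ ?_ ?_
      · intro hcon
        have := congrFun hcon (Sum.inl e)
        simp at this
      · intro i hi
        split_ifs with g1 g2
        · exact absurd (g1 ▸ he) hi
        · exact absurd (g2 ▸ hf) hi
        · rfl
      · intro v
        rw [two_point_sum (Sum.inl e) (Sum.inl f) hnei (-1) (fun i => inc G i v)]
        show inc G (Sum.inl e) v + (-1) * inc G (Sum.inl f) v = 0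
        rw [inc, inc, h1, h2]
        ring
    · refine det_Nm_eq_zero_of_dep G eqv χ b
        (fun i => if i = Sum.inl e then 1 else if i = Sum.inl f then 1 else 0) ?_ ?_ ?_
      · intro hcon
        have := congrFun hcon (Sum.inl e)
        simp at this
      · intro i hi
        split_ifs with g1 g2
        · exact absurd (g1 ▸ he) hi
        · exact absurd (g2 ▸ hf) hi
        · rfl
      · intro v
        rw [two_point_sum (Sum.inl e) (Sum.inl f) hnei 1 (fun i => inc G i v)]
        show inc G (Sum.inl e) v + 1 * inc G (Sum.inl f) v = 0
        rw [inc, inc, ← h1, ← h2]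
        split_ifs with a1 a2 <;>
          first | ring1 | exact absurd (a1.symm.trans a2) (G.ne e)
  -- existence of a loop in each component
  have hcomp_ex : ∀ comp : H.ConnectedComponent,
      ∃ l, χ (Sum.inr l) = b ∧ H.connectedComponentMk (G.loopAt l) = comp := by
    intro comp
    by_contra hno
    push_neg at hno
    apply hdet
    rw [← Matrix.exists_mulVec_eq_zero_iff]
    obtain ⟨v₀, hv₀⟩ := comp.exists_rep
    refine ⟨fun j => if sd (eqv j) = b ∧ H.connectedComponentMk (pj (eqv j)) = comp
        then 1 else 0, ?_, ?_⟩
    · intro hcon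
      have h1 := congrFun hcon (eqv.symm (bside b v₀))
      have hv₀' : H.connectedComponentMk v₀ = comp := hv₀
      simp only [Equiv.apply_symm_apply, sd_bside, pj_bside, hv₀', Pi.zero_apply] at h1
      simp at h1
    · funext i
      rw [mulVec_Nm]
      show _ = (0:ℝ)
      have hxval : ∀ v : V, (if sd (eqv (eqv.symm (bside (χ i) v))) = b ∧
            H.connectedComponentMk (pj (eqv (eqv.symm (bside (χ i) v)))) = comp
          then (1:ℝ) else 0)
          = if χ i = b ∧ H.connectedComponentMk v = comp then 1 else 0 := by
        intro v
        rw [Equiv.apply_symm_apply, sd_bside, pj_bside]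
      rw [Finset.sum_congr rfl fun v _ => by rw [hxval v]]
      by_cases hb : χ i = b
      · have hsimp : ∀ v : V, (if χ i = b ∧ H.connectedComponentMk v = comp
            then (1:ℝ) else 0) = if H.connectedComponentMk v = comp then 1 else 0 := by
          intro v
          by_cases hc : H.connectedComponentMk v = comp <;> simp [hb, hc]
        rw [Finset.sum_congr rfl fun v _ => by rw [hsimp v]]
        rcases i with e | l
        · rw [sum_inc_inl G e (fun v => if H.connectedComponentMk v = comp then 1 else 0)]
          have hadj : H.Adj (G.ends e).1 (G.ends e).2 := by
            rw [hH, LGraph.subSG, SimpleGraph.fromRel_adj]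
            exact ⟨G.ne e, Or.inl ⟨e, hb, rfl⟩⟩
          rw [SimpleGraph.ConnectedComponent.connectedComponentMk_eq_of_adj hadj]
          ring
        · rw [sum_inc_inr G l (fun v => if H.connectedComponentMk v = comp then 1 else 0)]
          rw [if_neg (hno l hb)]
      · have hsimp : ∀ v : V, (if χ i = b ∧ H.connectedComponentMk v = comp
            then (1:ℝ) else 0) = 0 := by
          intro v
          simp [hb]
        rw [Finset.sum_congr rfl fun v _ => by rw [hsimp v]]
        simp
  -- uniqueness of the loop in each component
  have huniq : ∀ l₁ l₂, χ (Sum.inr l₁) = b → χ (Sum.inr l₂) = b →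
      H.connectedComponentMk (G.loopAt l₁) = H.connectedComponentMk (G.loopAt l₂) →
      l₁ = l₂ := by
    intro l₁ l₂ hq1 hq2 hmk
    by_contra hne12
    apply hdet
    obtain ⟨p⟩ := SimpleGraph.ConnectedComponent.eq.mp hmk
    have hnei : (Sum.inr l₁ : E ⊕ L) ≠ Sum.inr l₂ := fun hcon => hne12 (Sum.inr.inj hcon)
    refine det_Nm_eq_zero_of_dep G eqv χ b
      (Sum.elim (fun e => if P e then (p.darts.map (fun d => dsign G e d.toProd)).sum else 0)
        (fun l => if l = l₁ then -1 else if l = l₂ then 1 else 0)) ?_ ?_ ?_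
    · intro hcon
      have h1 := congrFun hcon (Sum.inr l₁)
      simp at h1
    · rintro (e | l) hi
      · simp only [Sum.elim_inl]
        exact if_neg hi
      · simp only [Sum.elim_inr]
        split_ifs with g1 g2
        · exact absurd (g1 ▸ hq1) hi
        · exact absurd (g2 ▸ hq2) hi
        · rfl
    · intro v
      rw [Fintype.sum_sum_type]
      have hedge := walk_sum G hinj p v
      simp only [Sum.elim_inl, Sum.elim_inr]
      rw [hedge]
      have hloop : ∑ l, (if l = l₁ then (-1:ℝ) else if l = l₂ then 1 else 0)
          * inc G (Sum.inr l) v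
          = -(inc G (Sum.inr l₁) v) + inc G (Sum.inr l₂) v := by
        have key : ∀ l, (if l = l₁ then (-1:ℝ) else if l = l₂ then 1 else 0)
            * inc G (Sum.inr l) v
            = (if l = l₁ then -(inc G (Sum.inr l) v) else 0)
              + (if l = l₂ then inc G (Sum.inr l) v else 0) := by
          intro l
          split_ifs with g1 g2 <;>
            first | ring1 | exact absurd (g1 ▸ g2 : l₁ = l₂) hne12
        rw [Finset.sum_congr rfl fun l _ => key l, Finset.sum_add_distrib,
          Fintype.sum_ite_eq' l₁ (fun l => -(inc G (Sum.inr l) v)),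
          Fintype.sum_ite_eq' l₂ (fun l => inc G (Sum.inr l) v)]
      rw [hloop, inc, inc]
      ring
  refine ⟨hinj, ?_, ?_⟩
  · -- acyclicity
    intro v c hc
    cases c with
    | nil => exact SimpleGraph.Walk.IsCycle.not_of_nil hc
    | @cons _ u _ ha p =>
      apply hdet
      have hadj := ha
      simp only [hH, LGraph.subSG, SimpleGraph.fromRel_adj] at hadj
      obtain ⟨hvu, hor⟩ := hadj
      have key : ∀ e₀, P e₀ → (G.ends e₀ = (v, u) ∨ G.ends e₀ = (u, v)) →
          (Nm G eqv χ).det = 0 := by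
        intro e₀ he₀ hends
        refine det_Nm_eq_zero_of_dep G eqv χ b
          (Sum.elim (fun e => if P e then
              ((SimpleGraph.Walk.cons ha p).darts.map (fun d => dsign G e d.toProd)).sum
            else 0) (fun _ => 0)) ?_ ?_ ?_
        · intro hcon
          have h1 := congrFun hcon (Sum.inl e₀)
          simp only [Sum.elim_inl, Pi.zero_apply, if_pos he₀] at h1
          rw [SimpleGraph.Walk.darts_cons, List.map_cons, List.sum_cons] at h1
          have hrest : (p.darts.map (fun d => dsign G e₀ d.toProd)).sum = 0 := by
            apply List.sum_eq_zero
            intro y hy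
            obtain ⟨d, hd, rfl⟩ := List.mem_map.mp hy
            by_contra hdne
            have hsym := dsign_ne_zero hdne
            have hmem : d.edge ∈ p.edges := List.mem_map_of_mem (f := SimpleGraph.Dart.edge) hd
            have hnodup := hc.edges_nodup
            rw [SimpleGraph.Walk.edges_cons, List.nodup_cons] at hnodup
            apply hnodup.1
            have hd_edge : d.edge = s(v, u) := by
              rw [SimpleGraph.Dart.edge]
              rw [hsym]
              rcases hends with hh | hh <;> rw [hh] <;> simp [Sym2.eq_swap]
            rw [← hd_edge]
            exact hmem
          rw [hrest, add_zero] at h1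
          have hds : dsign G e₀ (v, u) ≠ 0 := by
            rcases hends with hh | hh
            · rw [dsign, if_pos (by rw [hh])]
              norm_num
            · have hn1 : ¬((v, u) : V × V) = G.ends e₀ := by
                rw [hh]
                intro hcon
                exact hvu (Prod.ext_iff.mp hcon).1
              have hn2 : ((v, u) : V × V).swap = G.ends e₀ := by rw [hh]; rfl
              rw [dsign, if_neg hn1, if_pos hn2]
              norm_num
          exact hds h1
        · rintro (e | l) hi
          · simp only [Sum.elim_inl]
            exact if_neg hi
          · rfl
        · intro x
          rw [Fintype.sum_sum_type]
          simp only [Sum.elim_inl, Sum.elim_inr]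
          rw [walk_sum G hinj (SimpleGraph.Walk.cons ha p) x]
          simp
      rcases hor with ⟨e₀, he₀, hends⟩ | ⟨e₀, he₀, hends⟩
      · exact key e₀ he₀ (Or.inl hends)
      · exact key e₀ he₀ (Or.inr hends)
  · -- exactly one loop per component
    intro comp
    rw [Nat.card_eq_one_iff_unique]
    constructor
    · constructor
      rintro ⟨l₁, hl₁⟩ ⟨l₂, hl₂⟩
      exact Subtype.ext (huniq l₁ l₂ hl₁.1 hl₂.1 (hl₁.2.trans hl₂.2.symm))
    · obtain ⟨l, hl⟩ := hcomp_ex comp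
      exact ⟨⟨l, hl⟩⟩

end Main
end M202Aux

namespace M202Aux
section Final
variable {V E L : Type} [Fintype V] [Fintype E] [Fintype L]
  [DecidableEq V] [DecidableEq E] [DecidableEq L]

lemma expo_inj {χ₁ χ₂ : (E ⊕ L) → Bool} (h : expo χ₁ = expo χ₂) : χ₁ = χ₂ := by
  funext r
  by_contra hne
  have h1 : 1 ≤ expo χ₁ (vr r (χ₁ r)) := by
    rw [expo, Finsupp.finset_sum_apply]
    have := Finset.single_le_sum
      (f := fun r' : E ⊕ L =>
        (Finsupp.single (vr r' (χ₁ r')) 1 : ((E ⊕ E) ⊕ (L ⊕ L)) →₀ ℕ) (vr r (χ₁ r)))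
      (fun i _ => Nat.zero_le _) (Finset.mem_univ r)
    rwa [Finsupp.single_apply, if_pos rfl] at this
  have h2 : expo χ₂ (vr r (χ₁ r)) = 0 := by
    rw [expo, Finsupp.finset_sum_apply]
    refine Finset.sum_eq_zero fun r' _ => ?_
    rw [Finsupp.single_apply, if_neg]
    intro hcon
    obtain ⟨hr, hb⟩ := vr_inj r' r (χ₂ r') (χ₁ r) hcon
    exact hne ((hr ▸ hb : χ₂ r = χ₁ r)).symm
  rw [h, h2] at h1
  exact Nat.not_succ_le_zero 0 h1

end Final
end M202Aux

/-- **Nonvanishing of `det M_{2,0,2}(G)` characterizes decompositions into two spanning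
looped forests.**  The square matrix is formed using an arbitrary bijection `eqv`
between rows and columns, which exists since `m + c = 2n`; the partition is encoded by
Boolean labellings `ecol` of the edges and `lcol` of the loops. -/
theorem det_M202_ne_zero_iff_two_spanning_looped_forests
    {V E L : Type} [Fintype V] [Fintype E] [Fintype L]
    [DecidableEq V] [DecidableEq E] [DecidableEq L]
    (G : LGraph V E L)
    (hmc : Fintype.card E + Fintype.card L = 2 * Fintype.card V)
    (eqv : E ⊕ L ≃ V ⊕ V) :
    ((LGraph.M202 G).submatrix id eqv).det ≠ 0 ↔
      ∃ (ecol : E → Bool) (lcol : L → Bool), ∀ b : Bool,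
        G.IsLoopedForestOn (fun e => ecol e = b) (fun l => lcol l = b) := by
  classical
  rw [M202Aux.det_expand G eqv]
  constructor
  · intro hne
    have hex : ∃ χ : (E ⊕ L) → Bool, (M202Aux.Nm G eqv χ).det ≠ 0 := by
      by_contra hall
      push_neg at hall
      apply hne
      refine Finset.sum_eq_zero fun χ _ => ?_
      rw [hall χ, map_zero]
    obtain ⟨χ, hχ⟩ := hex
    exact ⟨fun e => χ (Sum.inl e), fun l => χ (Sum.inr l),
      fun b => M202Aux.forests_of_det_Nm_ne_zero G eqv χ hχ b⟩
  · rintro ⟨ecol, lcol, hf⟩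
    set χ : (E ⊕ L) → Bool := Sum.elim ecol lcol with hχdef
    have hχ : (M202Aux.Nm G eqv χ).det ≠ 0 :=
      M202Aux.det_Nm_ne_zero_of_forests G eqv χ (fun b => hf b)
    intro h0
    apply hχ
    have hc := congrArg (MvPolynomial.coeff (M202Aux.expo χ)) h0
    rw [MvPolynomial.coeff_sum, MvPolynomial.coeff_zero] at hc
    rw [Finset.sum_eq_single χ] at hc
    · rwa [MvPolynomial.coeff_monomial, if_pos rfl] at hc
    · intro χ' _ hne'
      rw [MvPolynomial.coeff_monomial, if_neg (fun hcon => hne' (M202Aux.expo_inj hcon))]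
    · intro hmem
      exact absurd (Finset.mem_univ χ) hmem
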